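/- Let B be a random positive semidefinite p×p matrix with E[B] = I and √(E[(vᵀBv)²]) ≤ h·|v|₂² for all v ∈ ℝᵖ, where h > 1. For R > 0 define the truncation B^R = min(1, R/tr(B))·B (with B^R = 0 when tr(B) = 0). Then for every unit vector v: (i) ⟨v, B^R v⟩ ≤ ⟨v, B v⟩; (ii) E[⟨v, B^R v⟩] ≥ 1 − h²p/R; and (iii) E[tr(B^R)²] ≤ h²p². -/

import Mathlib

open MeasureTheory Matrix

lemma tr_sq_int_mul {Ω : Type*} [MeasurableSpace Ω] {μ : Measure Ω} {f g : Ω → ℝ}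
    (hfm : AEStronglyMeasurable f μ) (hgm : AEStronglyMeasurable g μ)
    (hf2 : Integrable (fun ω => f ω ^ 2) μ) (hg2 : Integrable (fun ω => g ω ^ 2) μ) :
    Integrable (fun ω => f ω * g ω) μ := by
  refine Integrable.mono' (((hf2.add hg2).div_const 2)) (hfm.mul hgm)
    (Filter.Eventually.of_forall fun ω => ?_)
  simp only [Pi.add_apply]
  rw [Real.norm_eq_abs, abs_mul]
  nlinarith [sq_nonneg (|f ω| - |g ω|), sq_abs (f ω), sq_abs (g ω),
    abs_nonneg (f ω), abs_nonneg (g ω)]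

lemma tr_cs_int {Ω : Type*} [MeasurableSpace Ω] {μ : Measure Ω} {f g : Ω → ℝ}
    (hf0 : ∀ ω, 0 ≤ f ω) (hg0 : ∀ ω, 0 ≤ g ω)
    (hfm : AEStronglyMeasurable f μ) (hgm : AEStronglyMeasurable g μ)
    (hf2 : Integrable (fun ω => f ω ^ 2) μ) (hg2 : Integrable (fun ω => g ω ^ 2) μ) :
    ∫ ω, f ω * g ω ∂μ ≤ Real.sqrt (∫ ω, f ω ^ 2 ∂μ) * Real.sqrt (∫ ω, g ω ^ 2 ∂μ) := by
  have hpq : Real.HolderConjugate 2 2 := Real.HolderConjugate.two_two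
  have h2 : ENNReal.ofReal (2:ℝ) = 2 := by norm_num
  have hf : MemLp f (ENNReal.ofReal (2:ℝ)) μ := by
    rw [h2]; exact (memLp_two_iff_integrable_sq hfm).mpr hf2
  have hg : MemLp g (ENNReal.ofReal (2:ℝ)) μ := by
    rw [h2]; exact (memLp_two_iff_integrable_sq hgm).mpr hg2
  have key := integral_mul_le_Lp_mul_Lq_of_nonneg hpq (Filter.Eventually.of_forall hf0)
    (Filter.Eventually.of_forall hg0) hf hg
  have hrw : ∀ x : ℝ, x ^ (2:ℝ) = x ^ 2 := fun x => by
    rw [show (2:ℝ) = ((2:ℕ):ℝ) by norm_num, Real.rpow_natCast]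
  simp only [hrw] at key
  rw [Real.sqrt_eq_rpow, Real.sqrt_eq_rpow]
  exact key

lemma tr_single_quad {p : ℕ} (M : Matrix (Fin p) (Fin p) ℝ) (i j : Fin p) :
    (Pi.single i 1 : Fin p → ℝ) ⬝ᵥ M *ᵥ (Pi.single j 1) = M i j := by
  simp [Matrix.mulVec_single, single_dotProduct]

/-- Estimates for the truncation `B^R = min(1, R/tr B) • B` of a random positive
semidefinite matrix `B` with identity mean and `√E[(vᵀBv)²] ≤ h |v|₂²`. -/
theorem truncation_estimates {Ω : Type*} [MeasurableSpace Ω]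
    (μ : Measure Ω) [IsProbabilityMeasure μ] {p : ℕ}
    (B : Ω → Matrix (Fin p) (Fin p) ℝ)
    (hmeas : ∀ i j, Measurable (fun ω => B ω i j))
    (hpsd : ∀ ω, (B ω).PosSemidef)
    (hintB : ∀ i j, Integrable (fun ω => B ω i j) μ)
    (hmean : ∀ i j, ∫ ω, B ω i j ∂μ = (1 : Matrix (Fin p) (Fin p) ℝ) i j)
    (h : ℝ) (hh : 1 < h)
    (hint2 : ∀ v : Fin p → ℝ, Integrable (fun ω => (v ⬝ᵥ (B ω).mulVec v) ^ 2) μ)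
    (hmom : ∀ v : Fin p → ℝ,
      Real.sqrt (∫ ω, (v ⬝ᵥ (B ω).mulVec v) ^ 2 ∂μ) ≤ h * ∑ j, (v j) ^ 2)
    (R : ℝ) (hR : 0 < R)
    (BR : Ω → Matrix (Fin p) (Fin p) ℝ)
    (hBR : ∀ ω, BR ω = if (B ω).trace = 0 then 0
      else (min 1 (R / (B ω).trace)) • B ω) :
    ∀ v : Fin p → ℝ, (∑ j, (v j) ^ 2 = 1) →
      (∀ ω, v ⬝ᵥ (BR ω).mulVec v ≤ v ⬝ᵥ (B ω).mulVec v) ∧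
      (∫ ω, v ⬝ᵥ (BR ω).mulVec v ∂μ ≥ 1 - h ^ 2 * p / R) ∧
      (∫ ω, ((BR ω).trace) ^ 2 ∂μ ≤ h ^ 2 * (p : ℝ) ^ 2) := by
  intro v hv
  have hh0 : (0:ℝ) < h := lt_trans one_pos hh
  -- quadratic form
  set q : Ω → ℝ := fun ω => v ⬝ᵥ (B ω).mulVec v with hqdef
  have hq0 : ∀ ω, 0 ≤ q ω := by
    intro ω
    have := (hpsd ω).dotProduct_mulVec_nonneg v
    simpa using this
  have hqm : Measurable q := by
    simp only [hqdef, dotProduct, Matrix.mulVec]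
    exact Finset.measurable_sum _ fun i _ =>
      ((Finset.measurable_sum _ fun j _ => (hmeas i j).mul_const (v j)).const_mul (v i))
  have hqi : Integrable q μ := by
    have hrw : ∀ ω, q ω = ∑ i, ∑ j, v i * (B ω i j * v j) := by
      intro ω; simp [hqdef, dotProduct, Matrix.mulVec, Finset.mul_sum]
    rw [show q = fun ω => ∑ i, ∑ j, v i * (B ω i j * v j) from funext hrw]
    exact integrable_finset_sum _ fun i _ => integrable_finset_sum _ fun j _ =>
      ((hintB i j).mul_const (v j)).const_mul (v i)
  have hq_mean : ∫ ω, q ω ∂μ = 1 := by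
    have hrw : ∀ ω, q ω = ∑ i, ∑ j, v i * (B ω i j * v j) := by
      intro ω; simp [hqdef, dotProduct, Matrix.mulVec, Finset.mul_sum]
    simp only [hrw]
    rw [integral_finset_sum _ fun i _ => integrable_finset_sum _ fun j _ =>
      ((hintB i j).mul_const (v j)).const_mul (v i)]
    have : ∀ i, ∫ ω, ∑ j, v i * (B ω i j * v j) ∂μ = v i * v i := by
      intro i
      rw [integral_finset_sum _ fun j _ => ((hintB i j).mul_const (v j)).const_mul (v i)]
      have : ∀ j, ∫ ω, v i * (B ω i j * v j) ∂μ = v i * ((1:Matrix (Fin p) (Fin p) ℝ) i j * v j) := by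
        intro j
        rw [integral_const_mul, integral_mul_const, hmean i j]
      simp only [this, Matrix.one_apply]
      simp [Finset.mul_sum, mul_ite, ite_mul]
    simp only [this]
    rw [← hv]
    exact Finset.sum_congr rfl fun i _ => by ring
  have hq2 : Integrable (fun ω => q ω ^ 2) μ := hint2 v
  have hq2_nonneg : (0:ℝ) ≤ ∫ ω, q ω ^ 2 ∂μ := integral_nonneg fun ω => sq_nonneg _
  have hq_sqrt : Real.sqrt (∫ ω, q ω ^ 2 ∂μ) ≤ h := by
    have := hmom v
    rwa [hv, mul_one] at this
  -- trace
  set T : Ω → ℝ := fun ω => (B ω).trace with hTdef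
  have hd0 : ∀ ω i, 0 ≤ B ω i i := by
    intro ω i
    have := (hpsd ω).dotProduct_mulVec_nonneg (Pi.single i 1)
    simpa [tr_single_quad] using this
  have hT0 : ∀ ω, 0 ≤ T ω := fun ω =>
    Finset.sum_nonneg fun i _ => hd0 ω i
  have hTm : Measurable T := by
    simp only [hTdef, Matrix.trace, Matrix.diag]
    exact Finset.measurable_sum _ fun i _ => hmeas i i
  have hd2 : ∀ i, Integrable (fun ω => B ω i i ^ 2) μ := by
    intro i
    have := hint2 (Pi.single i 1)
    simpa only [tr_single_quad] using this
  have hsingle_norm : ∀ i : Fin p, ∑ j, (Pi.single i 1 : Fin p → ℝ) j ^ 2 = 1 := by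
    intro i
    simp [Pi.single_apply]
  have hd_sqrt : ∀ i, Real.sqrt (∫ ω, B ω i i ^ 2 ∂μ) ≤ h := by
    intro i
    have := hmom (Pi.single i 1)
    rw [hsingle_norm i, mul_one] at this
    simpa only [tr_single_quad] using this
  have hT2rw : ∀ ω, T ω ^ 2 = ∑ i, ∑ j, B ω i i * B ω j j := by
    intro ω
    simp [hTdef, Matrix.trace, Matrix.diag, sq, Finset.sum_mul_sum]
  have hT2i : Integrable (fun ω => T ω ^ 2) μ := by
    simp only [hT2rw]
    exact integrable_finset_sum _ fun i _ => integrable_finset_sum _ fun j _ =>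
      tr_sq_int_mul (hmeas i i).aestronglyMeasurable (hmeas j j).aestronglyMeasurable
        (hd2 i) (hd2 j)
  have hT2_le : ∫ ω, T ω ^ 2 ∂μ ≤ h ^ 2 * (p:ℝ) ^ 2 := by
    simp only [hT2rw]
    rw [integral_finset_sum _ fun i _ => integrable_finset_sum _ fun j _ =>
      tr_sq_int_mul (hmeas i i).aestronglyMeasurable (hmeas j j).aestronglyMeasurable
        (hd2 i) (hd2 j)]
    have : ∀ i ∈ Finset.univ, ∫ ω, ∑ j, B ω i i * B ω j j ∂μ ≤ ∑ _j : Fin p, h * h := by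
      intro i _
      rw [integral_finset_sum _ fun j _ =>
        tr_sq_int_mul (hmeas i i).aestronglyMeasurable (hmeas j j).aestronglyMeasurable
          (hd2 i) (hd2 j)]
      refine Finset.sum_le_sum fun j _ => ?_
      calc ∫ ω, B ω i i * B ω j j ∂μ
          ≤ Real.sqrt (∫ ω, B ω i i ^ 2 ∂μ) * Real.sqrt (∫ ω, B ω j j ^ 2 ∂μ) :=
            tr_cs_int (fun ω => hd0 ω i) (fun ω => hd0 ω j)
              (hmeas i i).aestronglyMeasurable (hmeas j j).aestronglyMeasurable
              (hd2 i) (hd2 j)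
        _ ≤ h * h :=
            mul_le_mul (hd_sqrt i) (hd_sqrt j) (Real.sqrt_nonneg _) hh0.le
    calc ∑ i, ∫ ω, ∑ j, B ω i i * B ω j j ∂μ
        ≤ ∑ _i : Fin p, ∑ _j : Fin p, h * h := Finset.sum_le_sum this
      _ = h ^ 2 * (p:ℝ) ^ 2 := by
          simp [Finset.sum_const, Finset.card_univ]; ring
  -- truncation factor
  set c : Ω → ℝ := fun ω => if T ω = 0 then 0 else min 1 (R / T ω) with hcdef
  have hc0 : ∀ ω, 0 ≤ c ω := by
    intro ω
    simp only [hcdef]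
    split_ifs with hz
    · exact le_refl 0
    · exact le_min zero_le_one (div_nonneg hR.le (hT0 ω))
  have hc1 : ∀ ω, c ω ≤ 1 := by
    intro ω
    simp only [hcdef]
    split_ifs with hz
    · exact zero_le_one
    · exact min_le_left _ _
  have hcm : Measurable c := by
    have : MeasurableSet {ω | T ω = 0} := hTm (measurableSet_singleton 0)
    exact Measurable.ite this measurable_const
      (measurable_const.min (measurable_const.div hTm))
  have hBR' : ∀ ω, BR ω = c ω • B ω := by
    intro ω
    rw [hBR ω]
    simp only [hcdef]
    split_ifs with hz
    · simp
    · rfl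
  have hqBR : ∀ ω, v ⬝ᵥ (BR ω).mulVec v = c ω * q ω := by
    intro ω
    rw [hBR' ω]
    simp [Matrix.smul_mulVec, hqdef, smul_eq_mul]
  -- Part (i)
  have part1 : ∀ ω, v ⬝ᵥ (BR ω).mulVec v ≤ v ⬝ᵥ (B ω).mulVec v := by
    intro ω
    rw [hqBR ω]
    calc c ω * q ω ≤ 1 * q ω := mul_le_mul_of_nonneg_right (hc1 ω) (hq0 ω)
      _ = q ω := one_mul _
  -- q vanishes when the trace vanishes
  have hq_zero : ∀ ω, T ω = 0 → q ω = 0 := by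
    intro ω hz
    have hdiag : ∀ i, B ω i i = 0 := by
      intro i
      exact (Finset.sum_eq_zero_iff_of_nonneg (fun j _ => hd0 ω j)).mp hz i (Finset.mem_univ i)
    have hsym : ∀ i j, B ω j i = B ω i j := by
      intro i j
      have := congrFun (congrFun (hpsd ω).1 i) j
      simpa [Matrix.conjTranspose_apply] using this
    have hzero : ∀ i j, B ω i j = 0 := by
      intro i j
      rcases eq_or_ne i j with rfl | hij
      · exact hdiag i
      · have h1 := (hpsd ω).dotProduct_mulVec_nonneg (Pi.single i 1 + Pi.single j 1)
        have h2 := (hpsd ω).dotProduct_mulVec_nonneg (Pi.single i 1 - Pi.single j 1)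
        simp only [star_trivial, add_dotProduct, sub_dotProduct, Matrix.mulVec_add,
          Matrix.mulVec_sub, dotProduct_add, dotProduct_sub, tr_single_quad] at h1 h2
        rw [hdiag i, hdiag j, hsym i j] at h1 h2
        linarith
    simp [hqdef, dotProduct, Matrix.mulVec, hzero]
  -- Part (iii)
  have part3 : ∫ ω, ((BR ω).trace) ^ 2 ∂μ ≤ h ^ 2 * (p : ℝ) ^ 2 := by
    refine le_trans (integral_mono_of_nonneg
      (Filter.Eventually.of_forall fun ω => sq_nonneg _) hT2i
      (Filter.Eventually.of_forall fun ω => ?_)) hT2_le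
    show ((BR ω).trace) ^ 2 ≤ T ω ^ 2
    rw [hBR' ω, Matrix.trace_smul, smul_eq_mul, mul_pow]
    have hcc : c ω ^ 2 ≤ 1 := by nlinarith [hc0 ω, hc1 ω]
    have hTT : (B ω).trace = T ω := rfl
    rw [hTT]
    nlinarith [hcc, sq_nonneg (T ω)]
  -- Part (ii)
  set A : Set Ω := {ω | R < T ω} with hAdef
  have hA : MeasurableSet A := measurableSet_lt measurable_const hTm
  have hcheb : (μ A).toReal ≤ h ^ 2 * (p:ℝ) ^ 2 / R ^ 2 := by
    have hsub : A ⊆ {ω | R ^ 2 ≤ T ω ^ 2} := by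
      intro ω hω
      have h1 : R < T ω := hω
      have := hT0 ω
      simp only [Set.mem_setOf_eq]
      nlinarith
    have hmar := mul_meas_ge_le_integral_of_nonneg (μ := μ)
      (Filter.Eventually.of_forall fun ω => sq_nonneg (T ω)) hT2i (R ^ 2)
    have hmono : (μ A).toReal ≤ (μ {ω | R ^ 2 ≤ T ω ^ 2}).toReal :=
      ENNReal.toReal_mono (measure_ne_top μ _) (measure_mono hsub)
    have hR2 : (0:ℝ) < R ^ 2 := by positivity
    have h4 : (μ {ω | R ^ 2 ≤ T ω ^ 2}).toReal ≤ (∫ ω, T ω ^ 2 ∂μ) / R ^ 2 := by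
      rw [le_div_iff₀ hR2]
      calc (μ {ω | R ^ 2 ≤ T ω ^ 2}).toReal * R ^ 2
          = R ^ 2 * (μ {ω | R ^ 2 ≤ T ω ^ 2}).toReal := by ring
        _ ≤ ∫ ω, T ω ^ 2 ∂μ := hmar
    calc (μ A).toReal ≤ (∫ ω, T ω ^ 2 ∂μ) / R ^ 2 := le_trans hmono h4
      _ ≤ h ^ 2 * (p:ℝ) ^ 2 / R ^ 2 := by
          gcongr
  set g : Ω → ℝ := fun ω => A.indicator (fun _ => (1:ℝ)) ω with hgdef
  have hg0 : ∀ ω, 0 ≤ g ω := fun ω => Set.indicator_nonneg (fun _ _ => zero_le_one) ω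
  have hg1 : ∀ ω, g ω ≤ 1 := by
    intro ω
    simp only [hgdef]
    by_cases hω : ω ∈ A
    · simp [Set.indicator_of_mem hω]
    · simp [Set.indicator_of_notMem hω]
  have hgm : Measurable g := measurable_const.indicator hA
  have hg2 : Integrable (fun ω => g ω ^ 2) μ := by
    have : (fun ω => g ω ^ 2) = g := by
      funext ω
      simp only [hgdef]
      by_cases hω : ω ∈ A <;> simp [hω]
    rw [this]
    exact (integrable_const 1).indicator hA
  have hg2_int : ∫ ω, g ω ^ 2 ∂μ = (μ A).toReal := by
    have : (fun ω => g ω ^ 2) = g := by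
      funext ω
      simp only [hgdef]
      by_cases hω : ω ∈ A <;> simp [hω]
    rw [this]
    simp only [hgdef]
    rw [integral_indicator_const (1:ℝ) hA]
    simp
    rfl
  -- key pointwise inequality
  have hkey : ∀ ω, q ω - c ω * q ω ≤ g ω * q ω := by
    intro ω
    by_cases hω : ω ∈ A
    · simp only [hgdef, Set.indicator_of_mem hω, one_mul]
      nlinarith [hc0 ω, hq0 ω]
    · simp only [hgdef, Set.indicator_of_notMem hω, zero_mul]
      rcases eq_or_lt_of_le (hT0 ω) with hz | hpos
      · rw [hq_zero ω hz.symm]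
        simp
      · have hle : T ω ≤ R := not_lt.mp hω
        have hc1' : c ω = 1 := by
          simp only [hcdef]
          rw [if_neg (ne_of_gt hpos)]
          exact min_eq_left ((le_div_iff₀ hpos).mpr (by linarith))
        rw [hc1', one_mul]
        simp
  have hcq_i : Integrable (fun ω => c ω * q ω) μ := by
    refine Integrable.mono' hqi ((hcm.mul hqm).aestronglyMeasurable)
      (Filter.Eventually.of_forall fun ω => ?_)
    rw [Real.norm_eq_abs, abs_mul, abs_of_nonneg (hc0 ω), abs_of_nonneg (hq0 ω)]
    exact mul_le_of_le_one_left (hq0 ω) (hc1 ω)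
  have hgq_i : Integrable (fun ω => g ω * q ω) μ := by
    refine Integrable.mono' hqi ((hgm.mul hqm).aestronglyMeasurable)
      (Filter.Eventually.of_forall fun ω => ?_)
    rw [Real.norm_eq_abs, abs_mul, abs_of_nonneg (hg0 ω), abs_of_nonneg (hq0 ω)]
    exact mul_le_of_le_one_left (hq0 ω) (hg1 ω)
  have hgq_le : ∫ ω, g ω * q ω ∂μ ≤ h ^ 2 * (p:ℝ) / R := by
    have hcs := tr_cs_int hg0 hq0 hgm.aestronglyMeasurable hqm.aestronglyMeasurable hg2 hq2
    rw [hg2_int] at hcs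
    have hsqrtA : Real.sqrt (μ A).toReal ≤ h * (p:ℝ) / R := by
      have : Real.sqrt (μ A).toReal ≤ Real.sqrt (h ^ 2 * (p:ℝ) ^ 2 / R ^ 2) :=
        Real.sqrt_le_sqrt hcheb
      have heq : h ^ 2 * (p:ℝ) ^ 2 / R ^ 2 = (h * (p:ℝ) / R) ^ 2 := by
        field_simp
      rw [heq, Real.sqrt_sq (by positivity)] at this
      exact this
    calc ∫ ω, g ω * q ω ∂μ
        ≤ Real.sqrt (μ A).toReal * Real.sqrt (∫ ω, q ω ^ 2 ∂μ) := hcs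
      _ ≤ (h * (p:ℝ) / R) * h := by
          exact mul_le_mul hsqrtA hq_sqrt (Real.sqrt_nonneg _) (by positivity)
      _ = h ^ 2 * (p:ℝ) / R := by ring
  have part2 : ∫ ω, v ⬝ᵥ (BR ω).mulVec v ∂μ ≥ 1 - h ^ 2 * (p:ℝ) / R := by
    have hrw : ∫ ω, v ⬝ᵥ (BR ω).mulVec v ∂μ = ∫ ω, c ω * q ω ∂μ := by
      exact integral_congr_ae (Filter.Eventually.of_forall hqBR)
    rw [hrw]
    have hdiff : ∫ ω, (q ω - c ω * q ω) ∂μ ≤ ∫ ω, g ω * q ω ∂μ :=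
      integral_mono (hqi.sub hcq_i) hgq_i hkey
    rw [integral_sub hqi hcq_i, hq_mean] at hdiff
    linarith
  exact ⟨part1, part2, part3⟩
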